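/- arXiv:1405.6333 — 3 statements merged into one kernel-verified Lean document; each statement's English description precedes it below -/
import Mathlib

section
/- For every measurable set A ⊆ ℝ^d, bounded open set W, u ∈ S^{d−1}, and ε ∈ ℝ nonzero, one has ∫_{W⊖[0,εu]} |1_A(x+εu) − 1_A(x)| dx = |ε| · σ_{εu;W}(A), where σ is the explicit linear combination of four local covariogram values. -/
open MeasureTheory Set Filter Topology Bornology Pointwise
open scoped ENNReal

noncomputable section

/-- Euclidean space ℝ^d. -/
abbrev Euc (d : ℕ) := EuclideanSpace ℝ (Fin d)

/-- Translate of a set: `y + A = {y + a : a ∈ A}`. -/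
def tset {d : ℕ} (y : Euc d) (A : Set (Euc d)) : Set (Euc d) :=
  (fun x => y + x) '' A

/-- Local covariogram `δ_{y;W}(A) = L^d(A ∩ (y+A) ∩ W)`. -/
def cov {d : ℕ} (A : Set (Euc d)) (y : Euc d) (W : Set (Euc d)) : ℝ :=
  (volume (A ∩ tset y A ∩ W)).toReal

/-- Minkowski difference of `U` with the segment `[0, v]`:
`U ⊖ [0,v] = {x : x + t • v ∈ U for all t ∈ [0,1]}`. -/
def mdiff {d : ℕ} (U : Set (Euc d)) (v : Euc d) : Set (Euc d) :=
  {x | ∀ t : ℝ, t ∈ Set.Icc (0:ℝ) 1 → x + t • v ∈ U}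

/-- `σ_{v;W}(A)`, a normalized linear combination of four local covariograms. -/
def sig {d : ℕ} (A : Set (Euc d)) (v : Euc d) (W : Set (Euc d)) : ℝ :=
  (1 / ‖v‖) * (cov A 0 (mdiff W (-v)) - cov A v (mdiff W (-v))
    + cov A 0 (mdiff W v) - cov A (-v) (mdiff W v))

/-- Directional variation `V_u(f;U)` of a function `f` in direction `u` in the open set `U`. -/
def dirVar {d : ℕ} (u : Euc d) (f : Euc d → ℝ) (U : Set (Euc d)) : ℝ≥0∞ :=
  ⨆ φ ∈ {φ : Euc d → ℝ | ContDiff ℝ 1 φ ∧ HasCompactSupport φ ∧ tsupport φ ⊆ U ∧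
      ∀ x, |φ x| ≤ 1},
    ENNReal.ofReal (∫ x in U, f x * fderiv ℝ φ x u)

/-- The canonical basis vector `e j` of ℝ^d. -/
def ebase {d : ℕ} (j : Fin d) : Euc d := EuclideanSpace.single j (1:ℝ)

/-- Variational (isotropic) perimeter `Per(A;U)`. -/
def per {d : ℕ} (A U : Set (Euc d)) : ℝ≥0∞ :=
  ⨆ φ ∈ {φ : Euc d → Euc d | ContDiff ℝ 1 φ ∧ HasCompactSupport φ ∧ tsupport φ ⊆ U ∧
      ∀ x, ‖φ x‖ ≤ 1},
    ENNReal.ofReal (∫ x in U,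
      A.indicator (fun _ => (1:ℝ)) x * ∑ i : Fin d, fderiv ℝ φ x (ebase i) i)

/-- Anisotropic perimeter `Per_B(A;U) = Σ_j V_{e_j}(A;U)`. -/
def perB {d : ℕ} (A U : Set (Euc d)) : ℝ≥0∞ :=
  ∑ j : Fin d, dirVar (ebase j) (A.indicator (fun _ => (1:ℝ))) U

/-- The open unit cube `(0,1)^d`. -/
def unitCube (d : ℕ) : Set (Euc d) := {x | ∀ i, 0 < x i ∧ x i < 1}

/-- An observation window: bounded open set with Lebesgue-negligible boundary. -/
def Window {d : ℕ} (W : Set (Euc d)) : Prop :=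
  IsOpen W ∧ IsBounded W ∧ volume (frontier W) = 0

/-- The σ-algebra on measurable sets of ℝ^d corresponding to local convergence in measure
(generated by the local volume evaluations on bounded measurable sets). -/
def ramsMS (d : ℕ) : MeasurableSpace (Set (Euc d)) :=
  MeasurableSpace.generateFrom
    {S | ∃ (B : Set (Euc d)) (t : ℝ≥0∞), MeasurableSet B ∧ IsBounded B ∧
      S = {A : Set (Euc d) | volume (A ∩ B) ≤ t}}

/-- One-dimensional variational perimeter. -/
def per1 (A U : Set ℝ) : ℝ≥0∞ :=
  ⨆ φ ∈ {φ : ℝ → ℝ | ContDiff ℝ 1 φ ∧ HasCompactSupport φ ∧ tsupport φ ⊆ U ∧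
      ∀ x, |φ x| ≤ 1},
    ENNReal.ofReal (∫ x in U, A.indicator (fun _ => (1:ℝ)) x * deriv φ x)

/-- `γ` is M-local covariogram admissible: positivity of linear combinations of local
covariograms over all measurable sets transfers to `γ`. -/
def MAdmissible {d : ℕ} (γ : Euc d → Set (Euc d) → ℝ) : Prop :=
  ∀ (q : ℕ) (a : Fin q → ℝ) (y : Fin q → Euc d) (W : Fin q → Set (Euc d)) (c : ℝ),
    (∀ i, Window (W i)) →
    (∀ A : Set (Euc d), MeasurableSet A → 0 ≤ c + ∑ i, a i * cov A (y i) (W i)) →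
    0 ≤ c + ∑ i, a i * γ (y i) (W i)

/-- `γ` is F-local covariogram admissible: positivity tested on closed sets only. -/
def FAdmissible {d : ℕ} (γ : Euc d → Set (Euc d) → ℝ) : Prop :=
  ∀ (q : ℕ) (a : Fin q → ℝ) (y : Fin q → Euc d) (W : Fin q → Set (Euc d)) (c : ℝ),
    (∀ i, Window (W i)) →
    (∀ F : Set (Euc d), IsClosed F → 0 ≤ c + ∑ i, a i * cov F (y i) (W i)) →
    0 ≤ c + ∑ i, a i * γ (y i) (W i)

/-- The analogue `σ_γ(u;W)` of `σ` for a covariogram candidate function `γ`. -/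
def sigGamma {d : ℕ} (γ : Euc d → Set (Euc d) → ℝ) (u : Euc d) (W : Set (Euc d)) : ℝ :=
  (1 / ‖u‖) * (γ 0 (mdiff W (-u)) - γ u (mdiff W (-u))
    + γ 0 (mdiff W u) - γ (-u) (mdiff W u))

/-- `L_j(γ,W) = sup_{ε ∈ ℝ} σ_γ(ε e_j; W)` (valued in `[0,∞]`). -/
def Lconst {d : ℕ} (γ : Euc d → Set (Euc d) → ℝ) (j : Fin d) (W : Set (Euc d)) : ℝ≥0∞ :=
  ⨆ ε : ℝ, ENNReal.ofReal (sigGamma γ (ε • ebase j) W)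

/-- The grid cell `C^n_k = k/n + [0,1/n]^d`. -/
def cell {d : ℕ} (n : ℕ) (k : Fin d → ℤ) : Set (Euc d) :=
  {x | ∀ i, (k i : ℝ) / n ≤ x i ∧ x i ≤ (k i : ℝ) / n + 1 / n}

/-- The closed ℓ∞ hypercube of center `z` and half side length `ρ`. -/
def hcube {d : ℕ} (z : Euc d) (ρ : ℝ) : Set (Euc d) :=
  {x | ∀ i, |x i - z i| ≤ ρ}

/-- The open cube `U_n = (-n,n)^d`. -/
def cubeU {d : ℕ} (n : ℕ) : Set (Euc d) := {x | ∀ i, |x i| < (n : ℝ)}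

end

lemma isOpen_mdiff {d : ℕ} {W : Set (Euc d)} (hW : IsOpen W) (v : Euc d) :
    IsOpen (mdiff W v) := by
  rw [Metric.isOpen_iff]
  intro x hx
  have hK : IsCompact ((fun t : ℝ => x + t • v) '' Set.Icc 0 1) :=
    isCompact_Icc.image (by continuity)
  have hKW : (fun t : ℝ => x + t • v) '' Set.Icc 0 1 ⊆ W := by
    rintro _ ⟨t, ht, rfl⟩; exact hx t ht
  obtain ⟨δ, hδ, hsub⟩ := hK.exists_thickening_subset_open hW hKW
  refine ⟨δ, hδ, fun y hy t ht => hsub ?_⟩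
  refine Metric.mem_thickening_iff.mpr ⟨x + t • v, ⟨t, ht, rfl⟩, ?_⟩
  simpa [dist_add_right] using hy

lemma mdiff_subset {d : ℕ} (W : Set (Euc d)) (v : Euc d) : mdiff W v ⊆ W := by
  intro x hx
  have := hx 0 ⟨le_refl 0, zero_le_one⟩
  simpa using this

lemma tset_eq {d : ℕ} (y : Euc d) (A : Set (Euc d)) :
    tset y A = (fun x => x - y) ⁻¹' A := by
  ext x
  simp only [tset, Set.mem_image, Set.mem_preimage]
  constructor
  · rintro ⟨a, ha, rfl⟩; simpa using ha
  · intro h; exact ⟨x - y, h, by abel⟩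

/-- For `A` measurable, `W` bounded open, `u` a unit vector and `ε ≠ 0`,
`∫_{W⊖[0,εu]} |1_A(x+εu) − 1_A(x)| dx = |ε| · σ_{εu;W}(A)`. -/
theorem integral_indicator_diff_eq_sigma {d : ℕ} (A : Set (Euc d)) (hA : MeasurableSet A)
    (W : Set (Euc d)) (hWopen : IsOpen W) (hWbdd : IsBounded W)
    (u : Euc d) (hu : ‖u‖ = 1) (ε : ℝ) (hε : ε ≠ 0) :
    (∫ x in mdiff W (ε • u),
        |A.indicator (fun _ => (1:ℝ)) (x + ε • u) - A.indicator (fun _ => (1:ℝ)) x|) =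
      |ε| * sig A (ε • u) W := by
  set v : Euc d := ε • u with hvdef
  have hvnorm : ‖v‖ = |ε| := by
    rw [hvdef, norm_smul, hu, Real.norm_eq_abs, mul_one]
  have hεabs : |ε| ≠ 0 := abs_ne_zero.mpr hε
  set P : Set (Euc d) := (fun x => x + v) ⁻¹' A with hPdef
  have hPm : MeasurableSet P := hA.preimage (measurable_add_const v)
  set Wp : Set (Euc d) := mdiff W v with hWp
  set Wm : Set (Euc d) := mdiff W (-v) with hWm
  have hWpm : MeasurableSet Wp := (isOpen_mdiff hWopen v).measurableSet
  have hWmm : MeasurableSet Wm := (isOpen_mdiff hWopen (-v)).measurableSet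
  have hWfin : volume W ≠ ⊤ := hWbdd.measure_lt_top.ne
  have hfin : ∀ S : Set (Euc d), S ⊆ W → volume S ≠ ⊤ :=
    fun S hS => ((measure_mono hS).trans_lt hWbdd.measure_lt_top).ne
  -- preimage identities under translation by v
  have hWpre : (fun x => x + v) ⁻¹' Wm = Wp := by
    have key : ∀ (x : Euc d) (s : ℝ), x + v + s • (-v) = x + (1 - s) • v := by
      intro x s; module
    ext x
    simp only [Set.mem_preimage, hWm, hWp, mdiff, Set.mem_setOf_eq]
    constructor
    · intro h t ht
      have h2 := h (1 - t) ⟨by linarith [ht.2], by linarith [ht.1]⟩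
      rw [key] at h2
      have : (1 : ℝ) - (1 - t) = t := by ring
      rwa [this] at h2
    · intro h t ht
      rw [key]
      exact h (1 - t) ⟨by linarith [ht.2], by linarith [ht.1]⟩
  have hTpre : (fun x => x + v) ⁻¹' (tset v A) = A := by
    ext x; simp [tset_eq]
  -- tset simplifications
  have ht0 : tset 0 A = A := by
    ext x; simp [tset_eq]
  have htneg : tset (-v) A = P := by
    rw [tset_eq]
    ext x; simp [hPdef, sub_neg_eq_add]
  -- measure identities
  have hm : ∀ S : Set (Euc d), volume ((fun x => x + v) ⁻¹' S) = volume S :=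
    fun S => measure_preimage_add_right volume v S
  have hmeq1 : volume (A ∩ Wm) = volume (P ∩ Wp) := by
    rw [← hm (A ∩ Wm), Set.preimage_inter, hWpre]
  have hmeq2 : volume (A ∩ tset v A ∩ Wm) = volume (P ∩ A ∩ Wp) := by
    rw [← hm (A ∩ tset v A ∩ Wm), Set.preimage_inter, Set.preimage_inter, hWpre, hTpre]
  -- splitting
  have hsplit : ∀ (S T : Set (Euc d)), MeasurableSet S → MeasurableSet T →
      volume (S ∩ Wp) = volume (S ∩ T ∩ Wp) + volume ((S \ T) ∩ Wp) := by
    intro S T hS hT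
    rw [← measure_union ?_ ((hS.diff hT).inter hWpm)]
    · congr 1
      rw [← Set.union_inter_distrib_right, Set.inter_union_diff]
    · refine Set.disjoint_left.mpr fun x hx hx' => ?_
      exact hx'.1.2 hx.1.2
  have hPsplit := hsplit P A hPm hA
  have hAsplit := hsplit A P hA hPm
  -- the three relevant finite quantities
  set m1 : ℝ≥0∞ := volume (P ∩ A ∩ Wp) with hm1
  set m2 : ℝ≥0∞ := volume ((P \ A) ∩ Wp) with hm2
  set m3 : ℝ≥0∞ := volume ((A \ P) ∩ Wp) with hm3
  have hm1f : m1 ≠ ⊤ := hfin _ (Set.inter_subset_right.trans (mdiff_subset W v))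
  have hm2f : m2 ≠ ⊤ := hfin _ (Set.inter_subset_right.trans (mdiff_subset W v))
  have hm3f : m3 ≠ ⊤ := hfin _ (Set.inter_subset_right.trans (mdiff_subset W v))
  -- compute the integral
  have hpt : ∀ x : Euc d,
      |A.indicator (fun _ => (1:ℝ)) (x + v) - A.indicator (fun _ => (1:ℝ)) x| =
      (P \ A).indicator (fun _ => (1:ℝ)) x + (A \ P).indicator (fun _ => (1:ℝ)) x := by
    intro x
    have hx : A.indicator (fun _ => (1:ℝ)) (x + v) = P.indicator (fun _ => (1:ℝ)) x := by
      have hxP : (x ∈ P) = (x + v ∈ A) := rfl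
      by_cases h : x + v ∈ A <;>
        simp [Set.indicator_apply, hxP, h]
    rw [hx]
    by_cases h1 : x ∈ P <;> by_cases h2 : x ∈ A <;>
      simp [Set.indicator_apply, h1, h2]
  have hint : ∀ s : Set (Euc d), MeasurableSet s →
      Integrable (s.indicator (fun _ => (1:ℝ))) (volume.restrict Wp) := by
    intro s hs
    rw [integrable_indicator_iff hs]
    refine (integrableOn_const_iff).mpr (Or.inr ?_)
    rw [Measure.restrict_apply hs]
    exact (measure_mono (Set.inter_subset_right.trans (mdiff_subset W v))).trans_lt
      hWbdd.measure_lt_top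
  have heval : ∀ s : Set (Euc d), MeasurableSet s →
      (∫ x in Wp, s.indicator (fun _ => (1:ℝ)) x) = (volume (s ∩ Wp)).toReal := by
    intro s hs
    rw [setIntegral_indicator hs, setIntegral_const, smul_eq_mul, mul_one, Set.inter_comm, measureReal_def]
  have hLHS : (∫ x in Wp,
      |A.indicator (fun _ => (1:ℝ)) (x + v) - A.indicator (fun _ => (1:ℝ)) x|) =
      m2.toReal + m3.toReal := by
    rw [setIntegral_congr_fun hWpm (fun x _ => hpt x),
      integral_add (hint _ (hPm.diff hA)) (hint _ (hA.diff hPm)),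
      heval _ (hPm.diff hA), heval _ (hA.diff hPm)]
  rw [hLHS]
  -- compute the right-hand side
  unfold sig cov
  rw [ht0, htneg, Set.inter_self, hvnorm]
  rw [hmeq1, hmeq2, hPsplit, hAsplit]
  have hcomm : volume (A ∩ P ∩ Wp) = m1 := by rw [hm1, Set.inter_comm A P]
  rw [hcomm]
  rw [ENNReal.toReal_add hm1f hm2f, ENNReal.toReal_add hm1f hm3f]
  field_simp
  ring
end

section
/- Let μ be a random signed Radon measure on an open set U ⊆ ℝ^d defined on a probability space (Ω, A, P), such that for every ω the measure μ(ω,·) is absolutely continuous with respect to Lebesgue measure. Then there exists a jointly measurable function f : Ω × U → ℝ (measurable for the product σ-algebra A ⊗ B(U)) such that for every ω, f(ω,·) is a Radon–Nikodym derivative of μ(ω,·) with respect to Lebesgue measure. -/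
open MeasureTheory Set Filter Topology Bornology Pointwise
open scoped ENNReal

namespace RRN

variable {X : Type*} [MeasurableSpace X]

lemma sm_apply (s : SignedMeasure X) {k : Set X} (hk : MeasurableSet k) :
    s k = (s.toJordanDecomposition.posPart k).toReal
      - (s.toJordanDecomposition.negPart k).toReal := by
  conv_lhs => rw [← s.toSignedMeasure_toJordanDecomposition]
  rw [JordanDecomposition.toSignedMeasure, Measure.toSignedMeasure_sub_apply hk]
  rfl

lemma tv_finite (s : SignedMeasure X) : IsFiniteMeasure s.totalVariation := by
  unfold SignedMeasure.totalVariation; infer_instance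

lemma abs_sm_le (s : SignedMeasure X) {k : Set X} (hk : MeasurableSet k) :
    |s k| ≤ (s.totalVariation k).toReal := by
  rw [sm_apply s hk, SignedMeasure.totalVariation, Measure.add_apply,
    ENNReal.toReal_add (measure_ne_top _ _) (measure_ne_top _ _)]
  have h1 : (0:ℝ) ≤ (s.toJordanDecomposition.posPart k).toReal := ENNReal.toReal_nonneg
  have h2 : (0:ℝ) ≤ (s.toJordanDecomposition.negPart k).toReal := ENNReal.toReal_nonneg
  rw [abs_le]; constructor <;> linarith

lemma sm_diff_le (s : SignedMeasure X) {t t' : Set X} (ht : MeasurableSet t)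
    (ht' : MeasurableSet t') :
    s t' ≤ s t + (s.totalVariation (t' \ t)).toReal + (s.totalVariation (t \ t')).toReal := by
  have hd1 : Disjoint (t' ∩ t) (t' \ t) :=
    Set.disjoint_sdiff_right.mono_left Set.inter_subset_right
  have hd2 : Disjoint (t' ∩ t) (t \ t') := by
    rw [Set.inter_comm]
    exact Set.disjoint_sdiff_right.mono_left Set.inter_subset_right
  have h1 : s t' = s (t' ∩ t) + s (t' \ t) := by
    conv_lhs => rw [← Set.inter_union_diff t' t]
    exact VectorMeasure.of_union hd1 (ht'.inter ht) (ht'.diff ht)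
  have h2 : s t = s (t' ∩ t) + s (t \ t') := by
    conv_lhs => rw [← Set.inter_union_diff t t', Set.inter_comm t t']
    exact VectorMeasure.of_union hd2 (ht'.inter ht) (ht.diff ht')
  have b1 := abs_le.1 (abs_sm_le s (ht'.diff ht))
  have b2 := abs_le.1 (abs_sm_le s (ht.diff ht'))
  linarith [b1.2, b2.1]

lemma posPart_null (s : SignedMeasure X) {k : Set X} (hk : MeasurableSet k)
    (h : ∀ t ⊆ k, MeasurableSet t → s t = 0) :
    s.toJordanDecomposition.posPart k = 0 := by
  obtain ⟨i, hi₁, hi₂, hi₃, hpos, -⟩ := s.toJordanDecomposition_spec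
  rw [hpos, SignedMeasure.toMeasureOfZeroLE_apply _ hi₂ hi₁ hk]
  have : s (i ∩ k) = 0 := h _ Set.inter_subset_right (hi₁.inter hk)
  simp [this]

end RRN

namespace RRN

open TopologicalSpace in
lemma exists_good_family (X : Type*) [MeasurableSpace X] [TopologicalSpace X]
    [SecondCountableTopology X] [PseudoMetrizableSpace X] [BorelSpace X] :
    ∃ 𝒜 : Set (Set X), 𝒜.Countable ∧ (∀ A ∈ 𝒜, MeasurableSet A) ∧
      ∀ (ν : Measure X), IsFiniteMeasure ν → ∀ (T : Set X), MeasurableSet T →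
        ∀ ε : ℝ≥0∞, 0 < ε → ∃ A ∈ 𝒜, ν (A \ T) < ε ∧ ν (T \ A) < ε := by
  obtain ⟨b, hbc, -, hbb⟩ := exists_countable_basis X
  have hopen : ∀ s ∈ insert ∅ b, IsOpen s := by
    rintro s (rfl | hs)
    · exact isOpen_empty
    · exact hbb.isOpen hs
  refine ⟨Set.sUnion '' {t | t.Finite ∧ t ⊆ insert ∅ b}, ?_, ?_, ?_⟩
  · exact (Set.countable_setOf_finite_subset (hbc.insert ∅)).image _
  · rintro A ⟨t, ⟨htf, htb⟩, rfl⟩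
    exact (isOpen_sUnion fun s hs => hopen s (htb hs)).measurableSet
  · intro ν hνfin T hT ε hε
    haveI := hνfin
    have hε2 : (0:ℝ≥0∞) < ε / 2 := ENNReal.half_pos hε.ne'
    have h0 : ν T < ν T + ε / 2 := ENNReal.lt_add_right (measure_ne_top ν T) hε2.ne'
    obtain ⟨V, hTV, hVo, hV⟩ := Set.exists_isOpen_lt_of_lt T _ h0
    have hVd : ν (V \ T) < ε / 2 :=
      measure_diff_lt_of_lt_add hT.nullMeasurableSet hTV (measure_ne_top ν T) hV
    set C : Set (Set X) := insert ∅ {s ∈ b | s ⊆ V} with hC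
    have hCc : C.Countable := (hbc.mono (Set.sep_subset _ _)).insert ∅
    obtain ⟨f, hf⟩ := Set.Countable.exists_eq_range hCc (Set.insert_nonempty _ _)
    have hfC : ∀ n, f n ∈ C := fun n => hf ▸ Set.mem_range_self n
    have hfV : ∀ n, f n ⊆ V := by
      intro n
      rcases hfC n with h | h
      · simp [h]
      · exact h.2
    have hfb : ∀ n, f n ∈ insert ∅ b := by
      intro n
      rcases hfC n with h | h
      · simp [h]
      · exact Set.mem_insert_of_mem _ h.1
    have hVU2 : V = ⋃ n, f n := by
      have h1 : V = ⋃₀ C := by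
        rw [hC, Set.sUnion_insert, Set.empty_union]
        exact hbb.open_eq_sUnion' hVo
      rw [h1, hf, Set.sUnion_range]
    have hGmem : ∀ n, Set.accumulate f n ∈ Set.sUnion '' {t | t.Finite ∧ t ⊆ insert ∅ b} := by
      intro n
      refine ⟨f '' Set.Iic n, ⟨(Set.finite_Iic n).image f, ?_⟩, ?_⟩
      · rintro s ⟨k, -, rfl⟩; exact hfb k
      · rw [Set.sUnion_image]
        ext x
        simp [Set.accumulate_def]
    have hGV : ∀ n, Set.accumulate f n ⊆ V := by
      intro n
      rw [Set.accumulate_def]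
      exact Set.iUnion₂_subset fun k _ => hfV k
    have hGm : ∀ n, MeasurableSet (Set.accumulate f n) := by
      intro n
      rw [Set.accumulate_def]
      exact MeasurableSet.biUnion ((Set.finite_Iic n).countable) fun k _ => (hopen _ (hfb k)).measurableSet
    rcases eq_or_ne (ν V) 0 with hνV | hνV
    · refine ⟨∅, ⟨∅, by simp, by simp⟩, by simpa using hε, ?_⟩
      have : ν T = 0 := measure_mono_null hTV hνV
      simpa [this] using hε
    · have htend : Tendsto (fun n => ν (Set.accumulate f n)) atTop (𝓝 (ν V)) := by
        have := tendsto_measure_iUnion_accumulate (μ := ν) (f := f)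
        rwa [← hVU2] at this
      have hlt : ν V - ε / 2 < ν V :=
        ENNReal.sub_lt_self (measure_ne_top ν V) hνV hε2.ne'
      obtain ⟨n, hn⟩ := (htend.eventually (eventually_gt_nhds hlt)).exists
      have hVA : ν V < ν (Set.accumulate f n) + ε / 2 := by
        exact ENNReal.lt_add_of_sub_lt_right (Or.inl (measure_ne_top ν V)) hn
      have hAd : ν (V \ Set.accumulate f n) < ε / 2 :=
        measure_diff_lt_of_lt_add (hGm n).nullMeasurableSet (hGV n)
          (measure_ne_top ν _) hVA
      refine ⟨Set.accumulate f n, hGmem n, ?_, ?_⟩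
      · exact (measure_mono (Set.diff_subset_diff_left (hGV n))).trans_lt
          (hVd.trans_le ENNReal.half_le_self)
      · exact (measure_mono (Set.diff_subset_diff_left hTV)).trans_lt
          (hAd.trans_le ENNReal.half_le_self)

end RRN

namespace RRN

variable {X : Type*} [MeasurableSpace X]

lemma posPart_apply_eq_iSup {𝒜 : Set (Set X)} (h𝒜m : ∀ A ∈ 𝒜, MeasurableSet A)
    (h𝒜 : ∀ (ν : Measure X), IsFiniteMeasure ν → ∀ (T : Set X), MeasurableSet T →
      ∀ ε : ℝ≥0∞, 0 < ε → ∃ A ∈ 𝒜, ν (A \ T) < ε ∧ ν (T \ A) < ε)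
    (s : SignedMeasure X) {B : Set X} (hB : MeasurableSet B) :
    s.toJordanDecomposition.posPart B = ⨆ (A : 𝒜), ENNReal.ofReal (s (↑A ∩ B)) := by
  obtain ⟨i, hi₁, hi₂, hi₃, hpos, -⟩ := s.toJordanDecomposition_spec
  have hposB : s.toJordanDecomposition.posPart B = ENNReal.ofReal (s (i ∩ B)) := by
    rw [hpos, SignedMeasure.toMeasureOfZeroLE_apply _ hi₂ hi₁ hB]
    rw [ENNReal.ofReal]
    congr 1
    ext
    simp [Real.toNNReal,
      max_eq_left (s.nonneg_of_zero_le_restrict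
        (s.zero_le_restrict_subset hi₁ Set.inter_subset_left hi₂))]
  refine le_antisymm ?_ (iSup_le fun A => ?_)
  · rw [hposB]
    refine ENNReal.le_of_forall_pos_le_add fun ε hε _ => ?_
    haveI := tv_finite s
    set tv := s.totalVariation with htv
    obtain ⟨A, hA𝒜, h1, h2⟩ := h𝒜 tv inferInstance (i ∩ B) (hi₁.inter hB)
      (ENNReal.ofReal ((ε : ℝ) / 2)) (ENNReal.ofReal_pos.2 (by positivity))
    have hAm := h𝒜m A hA𝒜
    have key := sm_diff_le s (hAm.inter hB) (hi₁.inter hB)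
    have e1 : tv ((A ∩ B) \ (i ∩ B)) ≤ tv (A \ (i ∩ B)) :=
      measure_mono (Set.diff_subset_diff_left Set.inter_subset_left)
    have e2 : tv ((i ∩ B) \ (A ∩ B)) ≤ tv ((i ∩ B) \ A) := by
      refine measure_mono ?_
      rintro x ⟨hx1, hx2⟩
      exact ⟨hx1, fun hxA => hx2 ⟨hxA, hx1.2⟩⟩
    have t1 : (tv ((i ∩ B) \ (A ∩ B))).toReal ≤ (ε : ℝ) / 2 :=
      ENNReal.toReal_le_of_le_ofReal (by positivity) ((e2.trans_lt h2).le)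
    have t2 : (tv ((A ∩ B) \ (i ∩ B))).toReal ≤ (ε : ℝ) / 2 :=
      ENNReal.toReal_le_of_le_ofReal (by positivity) ((e1.trans_lt h1).le)
    have hle : s (i ∩ B) ≤ s (A ∩ B) + (ε : ℝ) := by
      have := key
      rw [← htv] at this
      linarith
    calc ENNReal.ofReal (s (i ∩ B)) ≤ ENNReal.ofReal (s (A ∩ B) + (ε : ℝ)) :=
          ENNReal.ofReal_le_ofReal hle
      _ ≤ ENNReal.ofReal (s (A ∩ B)) + ENNReal.ofReal (ε : ℝ) := ENNReal.ofReal_add_le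
      _ ≤ (⨆ (A : 𝒜), ENNReal.ofReal (s (↑A ∩ B))) + (ε : ℝ≥0∞) := by
          gcongr
          · exact le_iSup (fun A : 𝒜 => ENNReal.ofReal (s (↑A ∩ B))) ⟨A, hA𝒜⟩
          · simp
  · have hAm := h𝒜m A A.2
    have h : s (↑A ∩ B) ≤ (s.toJordanDecomposition.posPart B).toReal := by
      rw [sm_apply s (hAm.inter hB)]
      have h1 : (s.toJordanDecomposition.posPart (↑A ∩ B)).toReal
          ≤ (s.toJordanDecomposition.posPart B).toReal :=
        ENNReal.toReal_mono (measure_ne_top _ _) (measure_mono Set.inter_subset_right)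
      have h2 : (0:ℝ) ≤ (s.toJordanDecomposition.negPart (↑A ∩ B)).toReal :=
        ENNReal.toReal_nonneg
      linarith
    exact ENNReal.ofReal_le_of_le_toReal h

end RRN

namespace RRN

lemma meas_eval {X : Type*} [MeasurableSpace X] [MetricSpace X] [ProperSpace X]
    [OpensMeasurableSpace X] {Ω : Type*} [MeasurableSpace Ω] (x₀ : X)
    (U : Set X) (hU : IsOpen U) (μ : Ω → SignedMeasure X)
    (hsupp : ∀ ω, ∀ s : Set X, MeasurableSet s → s ⊆ Uᶜ → μ ω s = 0)
    (hmeas : ∀ B : Set X, MeasurableSet B → B ⊆ U → IsCompact (closure B) →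
      Measurable (fun ω => μ ω B))
    {B : Set X} (hB : MeasurableSet B) : Measurable fun ω => μ ω B := by
  classical
  set K : ℕ → Set X := fun n =>
    Metric.closedBall x₀ n ∩ {x | ((n : ℝ≥0∞) + 1)⁻¹ ≤ EMetric.infEdist x Uᶜ} with hK
  have hKclosed : ∀ n, IsClosed (K n) := fun n =>
    Metric.isClosed_closedBall.inter (isClosed_le continuous_const EMetric.continuous_infEdist)
  have hKcompact : ∀ n, IsCompact (K n) := fun n =>
    (isCompact_closedBall x₀ n).inter_right
      (isClosed_le continuous_const EMetric.continuous_infEdist)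
  have hKU : ∀ n, K n ⊆ U := by
    intro n x hx
    have h1 : (0 : ℝ≥0∞) < EMetric.infEdist x Uᶜ :=
      lt_of_lt_of_le (ENNReal.inv_pos.2 (by simp)) hx.2
    have h2 : x ∉ closure Uᶜ := EMetric.infEdist_pos_iff_notMem_closure.1 h1
    rw [hU.isClosed_compl.closure_eq] at h2
    simpa using h2
  have hKmono : Monotone K := by
    intro n m hnm x hx
    refine ⟨Metric.closedBall_subset_closedBall (by exact_mod_cast hnm) hx.1, ?_⟩
    refine le_trans (ENNReal.inv_le_inv.2 ?_) hx.2
    gcongr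
  have hcover : U ⊆ ⋃ n, K n := by
    intro x hx
    have h1 : (0 : ℝ≥0∞) < EMetric.infEdist x Uᶜ := by
      refine EMetric.infEdist_pos_iff_notMem_closure.2 ?_
      rw [hU.isClosed_compl.closure_eq]
      simpa using hx
    obtain ⟨n₁, hn₁⟩ := exists_nat_ge (dist x x₀)
    obtain ⟨n₂, hn₂⟩ := ENNReal.exists_inv_nat_lt h1.ne'
    refine Set.mem_iUnion.2 ⟨max n₁ n₂, ?_, ?_⟩
    · exact Metric.mem_closedBall.2 (hn₁.trans (by exact_mod_cast le_max_left n₁ n₂))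
    · refine le_trans (le_trans (ENNReal.inv_le_inv.2 ?_) hn₂.le) le_rfl
      exact_mod_cast (le_max_right n₁ n₂).trans (Nat.le_succ _)
  set D : ℕ → Set X := fun n => match n with
    | 0 => B ∩ K 0
    | (m+1) => (B ∩ K (m+1)) \ K m with hD
  have hDm : ∀ n, MeasurableSet (D n) := by
    intro n
    match n with
    | 0 => exact hB.inter (hKclosed 0).measurableSet
    | (m+1) => exact (hB.inter (hKclosed (m+1)).measurableSet).diff (hKclosed m).measurableSet
  have hDK : ∀ n, D n ⊆ B ∩ K n := by
    intro n
    match n with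
    | 0 => exact le_rfl
    | (m+1) => exact Set.diff_subset
  have hkey : ∀ a b, a < b → Disjoint (D a) (D b) := by
    intro a b hab
    match b, hab with
    | (m+1), hab =>
      refine Set.disjoint_left.2 fun x hxa hxb => ?_
      have h1 : x ∈ K m := hKmono (by omega : a ≤ m) ((hDK a hxa).2)
      exact hxb.2 h1
  have hDdisj : Pairwise (Function.onFun Disjoint D) := fun a b hab =>
    hab.lt_or_gt.elim (hkey a b) fun h => (hkey b a h).symm
  have hDunion : ⋃ n, D n = B ∩ U := by
    apply Set.Subset.antisymm
    · exact Set.iUnion_subset fun n => (hDK n).trans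
        (Set.inter_subset_inter_right B (hKU n))
    · rintro x ⟨hxB, hxU⟩
      have hex : ∃ n, x ∈ K n := Set.mem_iUnion.1 (hcover hxU)
      let n := Nat.find hex
      have hn : x ∈ K n := Nat.find_spec hex
      refine Set.mem_iUnion.2 ⟨n, ?_⟩
      match hn2 : n, hn with
      | 0, hn => exact ⟨hxB, hn⟩
      | (m+1), hn =>
        refine ⟨⟨hxB, hn⟩, fun hxm => ?_⟩
        exact Nat.find_min hex (by omega) hxm
  have htendsto : ∀ ω, HasSum (fun n => μ ω (D n)) (μ ω (B ∩ U)) := by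
    intro ω
    rw [← hDunion]
    exact (μ ω).m_iUnion hDm hDdisj
  have heq : (fun ω => μ ω B) = fun ω => μ ω (B ∩ U) := by
    funext ω
    conv_lhs => rw [← Set.inter_union_diff B U]
    rw [VectorMeasure.of_union (Set.disjoint_sdiff_right.mono_left Set.inter_subset_right)
      (hB.inter hU.measurableSet) (hB.diff hU.measurableSet)]
    rw [hsupp ω (B \ U) (hB.diff hU.measurableSet) (fun x hx => hx.2), add_zero]
  rw [heq]
  refine measurable_of_tendsto_metrizable' atTop
    (f := fun n ω => ∑ i ∈ Finset.range n, μ ω (D i)) (fun n => ?_)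
    (tendsto_pi_nhds.2 fun ω => (htendsto ω).tendsto_sum_nat)
  refine Finset.measurable_sum _ fun i _ => ?_
  have hsub : D i ⊆ U := ((hDK i).trans Set.inter_subset_right).trans (hKU i)
  have hcl : closure (D i) ⊆ K i :=
    closure_minimal ((hDK i).trans Set.inter_subset_right) (hKclosed i)
  exact hmeas (D i) (hDm i) hsub ((hKcompact i).of_isClosed_subset isClosed_closure hcl)

end RRN

namespace RRN

open ProbabilityTheory in
lemma rep {Ω X : Type*} [MeasurableSpace Ω] [MeasurableSpace X]
    [MeasurableSpace.CountableOrCountablyGenerated Ω X]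
    (κ : Kernel Ω X) [IsFiniteKernel κ] (ν₀ : Measure X) [IsFiniteMeasure ν₀]
    (g : X → ℝ≥0∞) (hg : Measurable g) (vol : Measure X) (hwd : vol.withDensity g = ν₀)
    (ω : Ω) (hκac : κ ω ≪ ν₀) {s : Set X} (hs : MeasurableSet s) :
    κ ω s = ∫⁻ x in s, g x * κ.rnDeriv (Kernel.const Ω ν₀) ω x ∂vol := by
  haveI : IsFiniteMeasure (κ ω) := IsFiniteKernel.isFiniteMeasure ω
  rw [← Measure.setLIntegral_rnDeriv hκac s]
  have hae : (fun x => (κ ω).rnDeriv ν₀ x) =ᵐ[ν₀] fun x => κ.rnDeriv (Kernel.const Ω ν₀) ω x := by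
    have := Kernel.rnDeriv_eq_rnDeriv_measure (κ := κ) (η := Kernel.const Ω ν₀) (a := ω)
    simpa [Kernel.const_apply] using this.symm
  rw [lintegral_congr_ae (ae_restrict_of_ae hae), ← hwd]
  exact setLIntegral_withDensity_eq_setLIntegral_mul vol hg
    (Kernel.measurable_rnDeriv_right κ _ ω) hs

end RRN

open ProbabilityTheory in
/-- Jointly measurable Radon–Nikodym derivatives for a random signed
(Radon) measure on an open set `U`, absolutely continuous with respect to Lebesgue
measure for every `ω`. -/
theorem random_radon_nikodym {d : ℕ} {Ω : Type*} [MeasurableSpace Ω]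
    (P : Measure Ω) [IsProbabilityMeasure P]
    (U : Set (Euc d)) (hU : IsOpen U)
    (μ : Ω → MeasureTheory.SignedMeasure (Euc d))
    (hsupp : ∀ ω, ∀ s : Set (Euc d), MeasurableSet s → s ⊆ Uᶜ → μ ω s = 0)
    (hmeas : ∀ B : Set (Euc d), MeasurableSet B → B ⊆ U → IsCompact (closure B) →
      Measurable (fun ω => μ ω B))
    (hac : ∀ ω, ∀ s : Set (Euc d), MeasurableSet s → volume s = 0 → μ ω s = 0) :
    ∃ f : Ω × Euc d → ℝ, Measurable f ∧
      ∀ ω, IntegrableOn (fun x => f (ω, x)) U volume ∧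
        ∀ s : Set (Euc d), MeasurableSet s → μ ω s = ∫ x in s, f (ω, x) := by
  classical
  obtain ⟨𝒜, h𝒜c, h𝒜m, h𝒜⟩ := RRN.exists_good_family (Euc d)
  haveI := h𝒜c.to_subtype
  have hev : ∀ {B : Set (Euc d)}, MeasurableSet B → Measurable fun ω => μ ω B :=
    fun hB => RRN.meas_eval 0 U hU μ hsupp hmeas hB
  set Pp : Ω → Measure (Euc d) := fun ω => (μ ω).toJordanDecomposition.posPart with hPp
  set Nn : Ω → Measure (Euc d) := fun ω => (μ ω).toJordanDecomposition.negPart with hNn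
  have hNalt : ∀ ω, Nn ω = (-(μ ω)).toJordanDecomposition.posPart := by
    intro ω
    rw [SignedMeasure.toJordanDecomposition_neg, JordanDecomposition.neg_posPart]
  have hPm : ∀ {B : Set (Euc d)}, MeasurableSet B → Measurable fun ω => Pp ω B := by
    intro B hB
    have h : ∀ ω, Pp ω B = ⨆ (A : 𝒜), ENNReal.ofReal (μ ω (↑A ∩ B)) := fun ω =>
      RRN.posPart_apply_eq_iSup h𝒜m h𝒜 (μ ω) hB
    simp_rw [h]
    exact Measurable.iSup fun A => (hev ((h𝒜m A A.2).inter hB)).ennreal_ofReal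
  have hNm : ∀ {B : Set (Euc d)}, MeasurableSet B → Measurable fun ω => Nn ω B := by
    intro B hB
    have h : ∀ ω, Nn ω B = ⨆ (A : 𝒜), ENNReal.ofReal (-(μ ω (↑A ∩ B))) := by
      intro ω
      rw [hNalt ω, RRN.posPart_apply_eq_iSup h𝒜m h𝒜 (-(μ ω)) hB]
      simp [VectorMeasure.neg_apply]
    simp_rw [h]
    exact Measurable.iSup fun A => ((hev ((h𝒜m A A.2).inter hB)).neg).ennreal_ofReal
  set mm : Ω → ℝ≥0∞ := fun ω => Pp ω Set.univ + Nn ω Set.univ with hmmdef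
  have hmm : Measurable mm := (hPm MeasurableSet.univ).add (hNm MeasurableSet.univ)
  have hmtop : ∀ ω, mm ω ≠ ⊤ := fun ω => by
    simp [hmmdef, ENNReal.add_ne_top, measure_ne_top]
  obtain ⟨ν₀, hν₀fin, hν₁ν₀, hν₀ν₁⟩ :=
    exists_isFiniteMeasure_absolutelyContinuous (volume.restrict U)
  haveI := hν₀fin
  have hvol0 : ∀ ω, ∀ s : Set (Euc d), MeasurableSet s → volume (s ∩ U) = 0 →
      ∀ t ⊆ s, MeasurableSet t → μ ω t = 0 := by
    intro ω s hs h0 t hts ht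
    have heq : μ ω t = μ ω (t ∩ U) + μ ω (t \ U) := by
      conv_lhs => rw [← Set.inter_union_diff t U]
      exact VectorMeasure.of_union (Set.disjoint_sdiff_right.mono_left Set.inter_subset_right)
        (ht.inter hU.measurableSet) (ht.diff hU.measurableSet)
    rw [heq, hsupp ω (t \ U) (ht.diff hU.measurableSet) (fun x hx => hx.2), add_zero]
    refine hac ω (t ∩ U) (ht.inter hU.measurableSet) ?_
    exact measure_mono_null (Set.inter_subset_inter_left U hts) h0
  have hPac : ∀ ω, Pp ω ≪ ν₀ := by
    intro ω
    refine Measure.AbsolutelyContinuous.mk fun s hs h0 => ?_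
    have hvol : volume (s ∩ U) = 0 := by
      have := hν₁ν₀ h0
      rwa [Measure.restrict_apply hs] at this
    exact RRN.posPart_null (μ ω) hs (hvol0 ω s hs hvol)
  have hNac : ∀ ω, Nn ω ≪ ν₀ := by
    intro ω
    refine Measure.AbsolutelyContinuous.mk fun s hs h0 => ?_
    have hvol : volume (s ∩ U) = 0 := by
      have := hν₁ν₀ h0
      rwa [Measure.restrict_apply hs] at this
    rw [hNalt ω]
    refine RRN.posPart_null (-(μ ω)) hs fun t hts ht => ?_
    simp [VectorMeasure.neg_apply, hvol0 ω s hs hvol t hts ht]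
  set cc : Ω → ℝ≥0∞ := fun ω => (mm ω + 1)⁻¹ with hcc
  have hcm : Measurable cc := (hmm.add measurable_const).inv
  have hccmul : ∀ ω, (mm ω + 1) * cc ω = 1 := fun ω =>
    ENNReal.mul_inv_cancel (by simp) (by simp [hmtop ω])
  set κp : Kernel Ω (Euc d) :=
    { toFun := fun ω => cc ω • Pp ω
      measurable' := Measure.measurable_of_measurable_coe _ fun B hB => by
        simp_rw [Measure.smul_apply, smul_eq_mul]
        exact hcm.mul (hPm hB) } with hκp
  set κn : Kernel Ω (Euc d) :=
    { toFun := fun ω => cc ω • Nn ω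
      measurable' := Measure.measurable_of_measurable_coe _ fun B hB => by
        simp_rw [Measure.smul_apply, smul_eq_mul]
        exact hcm.mul (hNm hB) } with hκn
  have hκpapp : ∀ ω, κp ω = cc ω • Pp ω := fun ω => rfl
  have hκnapp : ∀ ω, κn ω = cc ω • Nn ω := fun ω => rfl
  have hbound : ∀ (Q : Ω → Measure (Euc d)), (∀ ω, Q ω Set.univ ≤ mm ω) →
      ∀ ω, (cc ω • Q ω) Set.univ ≤ 1 := by
    intro Q hQ ω
    rw [Measure.smul_apply, smul_eq_mul]
    calc cc ω * Q ω Set.univ ≤ (mm ω + 1)⁻¹ * (mm ω + 1) := by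
          gcongr
          · exact (hQ ω).trans le_self_add
      _ = 1 := ENNReal.inv_mul_cancel (by simp) (by simp [hmtop ω])
  haveI : IsFiniteKernel κp :=
    ⟨⟨1, ENNReal.one_lt_top, fun ω =>
      hbound Pp (fun ω => by rw [hmmdef]; exact le_self_add) ω⟩⟩
  haveI : IsFiniteKernel κn :=
    ⟨⟨1, ENNReal.one_lt_top, fun ω =>
      hbound Nn (fun ω => by rw [hmmdef]; exact le_add_self) ω⟩⟩
  set η₀ : Kernel Ω (Euc d) := Kernel.const Ω ν₀ with hη₀
  set Kp : Ω → Euc d → ℝ≥0∞ := fun ω x => Kernel.rnDeriv κp η₀ ω x with hKp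
  set Kn : Ω → Euc d → ℝ≥0∞ := fun ω x => Kernel.rnDeriv κn η₀ ω x with hKn
  set g : Euc d → ℝ≥0∞ := ν₀.rnDeriv volume with hg
  have hgm : Measurable g := Measure.measurable_rnDeriv _ _
  have hν₀vol : ν₀ ≪ volume := hν₀ν₁.trans Measure.restrict_le_self.absolutelyContinuous
  have hwd : volume.withDensity g = ν₀ := Measure.withDensity_rnDeriv_eq _ _ hν₀vol
  have hκpac : ∀ ω, κp ω ≪ ν₀ := by
    intro ω
    refine Measure.AbsolutelyContinuous.mk fun s hs h0 => ?_
    rw [hκpapp, Measure.smul_apply, (hPac ω) h0, smul_zero]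
  have hκnac : ∀ ω, κn ω ≪ ν₀ := by
    intro ω
    refine Measure.AbsolutelyContinuous.mk fun s hs h0 => ?_
    rw [hκnapp, Measure.smul_apply, (hNac ω) h0, smul_zero]
  have hPrep : ∀ ω {s : Set (Euc d)}, MeasurableSet s →
      Pp ω s = ∫⁻ x in s, (mm ω + 1) * (g x * Kp ω x) ∂volume := by
    intro ω s hs
    have h1 : Pp ω s = (mm ω + 1) * κp ω s := by
      rw [hκpapp, Measure.smul_apply, smul_eq_mul, ← mul_assoc, hccmul, one_mul]
    rw [h1, RRN.rep κp ν₀ g hgm volume hwd ω (hκpac ω) hs, ← lintegral_const_mul (f := fun x => g x * κp.rnDeriv (Kernel.const Ω ν₀) ω x) _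
      (hgm.mul (Kernel.measurable_rnDeriv_right κp (Kernel.const Ω ν₀) ω))]
  have hNrep : ∀ ω {s : Set (Euc d)}, MeasurableSet s →
      Nn ω s = ∫⁻ x in s, (mm ω + 1) * (g x * Kn ω x) ∂volume := by
    intro ω s hs
    have h1 : Nn ω s = (mm ω + 1) * κn ω s := by
      rw [hκnapp, Measure.smul_apply, smul_eq_mul, ← mul_assoc, hccmul, one_mul]
    rw [h1, RRN.rep κn ν₀ g hgm volume hwd ω (hκnac ω) hs, ← lintegral_const_mul (f := fun x => g x * κn.rnDeriv (Kernel.const Ω ν₀) ω x) _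
      (hgm.mul (Kernel.measurable_rnDeriv_right κn (Kernel.const Ω ν₀) ω))]
  set Fp : Ω → Euc d → ℝ≥0∞ := fun ω x => (mm ω + 1) * (g x * Kp ω x) with hFp
  set Fn : Ω → Euc d → ℝ≥0∞ := fun ω x => (mm ω + 1) * (g x * Kn ω x) with hFn
  have hFpm : ∀ ω, Measurable (Fp ω) := fun ω =>
    (measurable_const.mul (hgm.mul (Kernel.measurable_rnDeriv_right κp η₀ ω)))
  have hFnm : ∀ ω, Measurable (Fn ω) := fun ω =>
    (measurable_const.mul (hgm.mul (Kernel.measurable_rnDeriv_right κn η₀ ω)))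
  have hFptop : ∀ ω, ∫⁻ x, Fp ω x ∂volume ≠ ⊤ := by
    intro ω
    have := hPrep ω MeasurableSet.univ
    rw [Measure.restrict_univ] at this
    rw [← this]
    exact measure_ne_top _ _
  have hFntop : ∀ ω, ∫⁻ x, Fn ω x ∂volume ≠ ⊤ := by
    intro ω
    have := hNrep ω MeasurableSet.univ
    rw [Measure.restrict_univ] at this
    rw [← this]
    exact measure_ne_top _ _
  have hip : ∀ ω (s : Set (Euc d)), Integrable (fun x => (Fp ω x).toReal)
      (volume.restrict s) := by
    intro ω s
    refine integrable_toReal_of_lintegral_ne_top (hFpm ω).aemeasurable ?_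
    exact ((lintegral_mono' Measure.restrict_le_self le_rfl).trans_lt
      (lt_top_iff_ne_top.2 (hFptop ω))).ne
  have hin : ∀ ω (s : Set (Euc d)), Integrable (fun x => (Fn ω x).toReal)
      (volume.restrict s) := by
    intro ω s
    refine integrable_toReal_of_lintegral_ne_top (hFnm ω).aemeasurable ?_
    exact ((lintegral_mono' Measure.restrict_le_self le_rfl).trans_lt
      (lt_top_iff_ne_top.2 (hFntop ω))).ne
  refine ⟨fun p => (Fp p.1 p.2).toReal - (Fn p.1 p.2).toReal, ?_, fun ω => ⟨?_, fun s hs => ?_⟩⟩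
  · refine Measurable.sub ?_ ?_
    · exact (((hmm.comp measurable_fst).add measurable_const).mul
        ((hgm.comp measurable_snd).mul (Kernel.measurable_rnDeriv κp η₀))).ennreal_toReal
    · exact (((hmm.comp measurable_fst).add measurable_const).mul
        ((hgm.comp measurable_snd).mul (Kernel.measurable_rnDeriv κn η₀))).ennreal_toReal
  · exact (hip ω U).sub (hin ω U)
  · rw [RRN.sm_apply (μ ω) hs, hPrep ω hs, hNrep ω hs]
    rw [← integral_toReal (hFpm ω).aemeasurable
      (ae_restrict_of_ae (ae_lt_top (hFpm ω) (hFptop ω)))]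
    rw [← integral_toReal (hFnm ω).aemeasurable
      (ae_restrict_of_ae (ae_lt_top (hFnm ω) (hFntop ω)))]
    exact (integral_sub (hip ω s) (hin ω s)).symm
end

section
/- A function γ : ℝ^d × W → ℝ is F-local covariogram admissible (positivity tested on all closed sets) if and only if it is M-local covariogram admissible (positivity tested on all measurable sets). -/
open MeasureTheory Set Filter Topology Bornology Pointwise
open scoped ENNReal

noncomputable section

lemma aux_vol_bounded {d : ℕ} {s : Set (Euc d)} (h : IsBounded s) : volume s < ⊤ :=
  lt_of_le_of_lt (measure_mono subset_closure) h.isCompact_closure.measure_lt_top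

lemma aux_pre_bounded {d : ℕ} (a : Euc d) {s : Set (Euc d)} (h : IsBounded s) :
    IsBounded ((fun x => a + x) ⁻¹' s) := by
  have e : (fun x => a + x) ⁻¹' s = (-a) +ᵥ s := by
    ext x
    constructor
    · intro h'; exact ⟨a + x, h', by simp [vadd_eq_add]⟩
    · rintro ⟨b, hb, rfl⟩; simpa [vadd_eq_add] using hb
  rw [e]; exact h.vadd _

lemma aux_vol_tset_inter {d : ℕ} (y : Euc d) (S W : Set (Euc d)) :
    volume (tset y S ∩ W) = volume (S ∩ (fun x => y + x) ⁻¹' W) := by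
  have e : (fun x => y + x) ⁻¹' (tset y S ∩ W) = S ∩ (fun x => y + x) ⁻¹' W := by
    ext x
    simp only [Set.mem_preimage, Set.mem_inter_iff, tset, Set.mem_image]
    constructor
    · rintro ⟨⟨a, ha, hay⟩, hw⟩
      have : a = x := by
        have := hay; exact add_left_cancel this
      exact ⟨this ▸ ha, hw⟩
    · rintro ⟨hS, hw⟩; exact ⟨⟨x, hS, rfl⟩, hw⟩
  rw [← measure_preimage_add volume y (tset y S ∩ W), e]

lemma aux_cov_mono {d : ℕ} {K A : Set (Euc d)} (h : K ⊆ A) (y : Euc d) {W : Set (Euc d)}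
    (hW : IsBounded W) : cov K y W ≤ cov A y W := by
  apply ENNReal.toReal_mono
  · exact ((measure_mono (inter_subset_right (s := A ∩ tset y A))).trans_lt
      (aux_vol_bounded hW)).ne
  · exact measure_mono (inter_subset_inter (inter_subset_inter h (image_mono h)) le_rfl)

lemma aux_cov_le {d : ℕ} {K A : Set (Euc d)} (_h : K ⊆ A) (y : Euc d) {W : Set (Euc d)}
    (hW : IsBounded W) :
    cov A y W ≤ cov K y W + (volume ((A \ K) ∩ W)).toReal
      + (volume ((A \ K) ∩ (fun x => y + x) ⁻¹' W)).toReal := by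
  have hsub : A ∩ tset y A ∩ W ⊆
      (K ∩ tset y K ∩ W) ∪ ((A \ K) ∩ W) ∪ (tset y (A \ K) ∩ W) := by
    rintro x ⟨⟨hA, hTA⟩, hw⟩
    by_cases hK : x ∈ K
    · by_cases hTK : x ∈ tset y K
      · exact Or.inl (Or.inl ⟨⟨hK, hTK⟩, hw⟩)
      · refine Or.inr ⟨?_, hw⟩
        obtain ⟨a, ha, rfl⟩ := hTA
        exact ⟨a, ⟨ha, fun h' => hTK ⟨a, h', rfl⟩⟩, rfl⟩
    · exact Or.inl (Or.inr ⟨⟨hA, hK⟩, hw⟩)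
  have hWv : volume W < ⊤ := aux_vol_bounded hW
  have hWv' : volume ((fun x => y + x) ⁻¹' W) < ⊤ := aux_vol_bounded (aux_pre_bounded y hW)
  have h1 : volume (K ∩ tset y K ∩ W) ≠ ⊤ :=
    ((measure_mono inter_subset_right).trans_lt hWv).ne
  have h2 : volume ((A \ K) ∩ W) ≠ ⊤ :=
    ((measure_mono inter_subset_right).trans_lt hWv).ne
  have h3 : volume ((A \ K) ∩ (fun x => y + x) ⁻¹' W) ≠ ⊤ :=
    ((measure_mono inter_subset_right).trans_lt hWv').ne
  have hμ : volume (A ∩ tset y A ∩ W) ≤ volume (K ∩ tset y K ∩ W)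
      + volume ((A \ K) ∩ W) + volume ((A \ K) ∩ (fun x => y + x) ⁻¹' W) := by
    calc volume (A ∩ tset y A ∩ W)
        ≤ volume ((K ∩ tset y K ∩ W) ∪ ((A \ K) ∩ W) ∪ (tset y (A \ K) ∩ W)) :=
          measure_mono hsub
      _ ≤ volume ((K ∩ tset y K ∩ W) ∪ ((A \ K) ∩ W)) + volume (tset y (A \ K) ∩ W) :=
          measure_union_le _ _
      _ ≤ volume (K ∩ tset y K ∩ W) + volume ((A \ K) ∩ W) + volume (tset y (A \ K) ∩ W) :=
          add_le_add (measure_union_le _ _) le_rfl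
      _ = _ := by rw [aux_vol_tset_inter]
  calc cov A y W ≤ (volume (K ∩ tset y K ∩ W)
        + volume ((A \ K) ∩ W) + volume ((A \ K) ∩ (fun x => y + x) ⁻¹' W)).toReal := by
        apply ENNReal.toReal_mono _ hμ
        simp only [Ne, ENNReal.add_eq_top, not_or]
        exact ⟨⟨h1, h2⟩, h3⟩
    _ = _ := by
        rw [ENNReal.toReal_add (by simp [ENNReal.add_eq_top, h1, h2]) h3,
          ENNReal.toReal_add h1 h2]
        rfl


end
/-- A function `γ : ℝ^d × W → ℝ` is F-local covariogram admissible
(positivity tested on closed sets) iff it is M-local covariogram admissible (positivity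
tested on measurable sets). -/
theorem FAdmissible_iff_MAdmissible {d : ℕ} (γ : Euc d → Set (Euc d) → ℝ) :
    FAdmissible γ ↔ MAdmissible γ := by
  constructor
  · -- F-admissible → M-admissible (trivial: closed sets are measurable)
    intro hF q a y W c hW hM
    exact hF q a y W c hW (fun F hFc => hM F hFc.measurableSet)
  · -- M-admissible → F-admissible (approximation of measurable sets by compacts)
    intro hM q a y W c hW hF
    apply hM q a y W c hW
    intro A hA
    -- it suffices to show 0 ≤ E + δ for all δ > 0
    apply le_of_forall_pos_le_add
    intro δ hδ
    set M : ℝ := ∑ i, |a i| with hMdef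
    have hM0 : 0 ≤ M := Finset.sum_nonneg fun i _ => abs_nonneg _
    set ε : ℝ := δ / (2 * (M + 1)) with hεdef
    have hε : 0 < ε := div_pos hδ (by positivity)
    -- the big bounded open set B'
    set B : Set (Euc d) := ⋃ i, (W i ∪ (fun x => y i + x) ⁻¹' W i) with hBdef
    have hWopen : ∀ i, IsOpen (W i) := fun i => (hW i).1
    have hWbdd : ∀ i, IsBounded (W i) := fun i => (hW i).2.1
    have hBopen : IsOpen B := isOpen_iUnion fun i =>
      ((hWopen i).union ((hWopen i).preimage (by continuity)))
    have hBbdd : IsBounded B := isBounded_iUnion.mpr fun i =>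
      ((hWbdd i).union (aux_pre_bounded (y i) (hWbdd i)))
    have hWB : ∀ i, W i ∪ (fun x => y i + x) ⁻¹' W i ⊆ B := fun i =>
      subset_iUnion (fun i => W i ∪ (fun x => y i + x) ⁻¹' W i) i
    have hABfin : volume (A ∩ B) ≠ ⊤ :=
      ((measure_mono inter_subset_right).trans_lt (aux_vol_bounded hBbdd)).ne
    obtain ⟨K, hKAB, hKcomp, hKlt⟩ :=
      (hA.inter hBopen.measurableSet).exists_isCompact_diff_lt hABfin
        (ε := ENNReal.ofReal ε) (ENNReal.ofReal_pos.mpr hε).ne'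
    have hKA : K ⊆ A := hKAB.trans inter_subset_left
    -- each difference set has volume ≤ ε
    have hdiff : ∀ S : Set (Euc d), S ⊆ B → (volume ((A \ K) ∩ S)).toReal ≤ ε := by
      intro S hSB
      have hsub : (A \ K) ∩ S ⊆ (A ∩ B) \ K := by
        rintro x ⟨⟨hxA, hxK⟩, hxS⟩; exact ⟨⟨hxA, hSB hxS⟩, hxK⟩
      calc (volume ((A \ K) ∩ S)).toReal ≤ (volume ((A ∩ B) \ K)).toReal :=
            ENNReal.toReal_mono (hKlt.trans_le le_top).ne (measure_mono hsub)
        _ ≤ (ENNReal.ofReal ε).toReal := ENNReal.toReal_mono ENNReal.ofReal_ne_top hKlt.le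
        _ = ε := ENNReal.toReal_ofReal hε.le
    -- per-index bound |cov A - cov K| ≤ 2ε
    have hcov : ∀ i, |cov A (y i) (W i) - cov K (y i) (W i)| ≤ 2 * ε := by
      intro i
      rw [abs_sub_le_iff]
      constructor
      · have h1 := aux_cov_le hKA (y i) (hWbdd i)
        have h2 : (volume ((A \ K) ∩ W i)).toReal ≤ ε :=
          hdiff (W i) ((subset_union_left).trans (hWB i))
        have h3 : (volume ((A \ K) ∩ (fun x => y i + x) ⁻¹' W i)).toReal ≤ ε :=
          hdiff _ ((subset_union_right).trans (hWB i))
        linarith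
      · have := aux_cov_mono hKA (y i) (hWbdd i)
        linarith [mul_nonneg (by norm_num : (0:ℝ) ≤ 2) hε.le]
    -- conclude
    have hFK : 0 ≤ c + ∑ i, a i * cov K (y i) (W i) :=
      hF K hKcomp.isClosed
    have hsum : ∑ i, a i * cov K (y i) (W i)
        ≤ ∑ i, a i * cov A (y i) (W i) + 2 * ε * M := by
      have : ∑ i, a i * cov K (y i) (W i) - ∑ i, a i * cov A (y i) (W i)
          ≤ 2 * ε * M := by
        rw [← Finset.sum_sub_distrib]
        calc ∑ i, (a i * cov K (y i) (W i) - a i * cov A (y i) (W i))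
            ≤ ∑ i, |a i| * (2 * ε) := by
              apply Finset.sum_le_sum
              intro i _
              rw [← mul_sub]
              calc a i * (cov K (y i) (W i) - cov A (y i) (W i))
                  ≤ |a i * (cov K (y i) (W i) - cov A (y i) (W i))| := le_abs_self _
                _ = |a i| * |cov K (y i) (W i) - cov A (y i) (W i)| := abs_mul _ _
                _ ≤ |a i| * (2 * ε) := by
                    apply mul_le_mul_of_nonneg_left _ (abs_nonneg _)
                    rw [abs_sub_comm]; exact hcov i
          _ = 2 * ε * M := by rw [← Finset.sum_mul, hMdef]; ring
      linarith
    have h2εM : 2 * ε * M ≤ δ := by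
      have heq : 2 * ε * (M + 1) = δ := by
        rw [hεdef]; field_simp
      nlinarith [hε.le]
    linarith
end
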